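/- For M ≥ 1, the number of plethystic semistandard tableaux of outer shape (M,M,M,M), inner shape (2,1), and weight (6M, 4M, 2M) (all entries positive) is exactly M+1. Consequently the plethysm coefficient ⟨s_{(M,M,M,M)} ∘ s_{(2,1)}, s_{(6M,4M,2M)}⟩ equals M+1 for all M ≥ 0, and in particular is unbounded. -/

import Mathlib

open scoped Classical

/-- A partition. -/
def IsPartition (f : ℕ → ℕ) : Prop :=
  (∀ i j, i ≤ j → f j ≤ f i) ∧ ∃ N, ∀ i, N ≤ i → f i = 0

/-- Box `(i, j)` (0-indexed) belongs to the skew shape `τ/τs`. -/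
def InShape (τ τs : ℕ → ℕ) (i j : ℕ) : Prop := τs i ≤ j ∧ j < τ i

/-- A semistandard tableau of skew shape `τ/τs` with positive entries: weakly increasing
along rows, strictly increasing down columns, zero off the shape. -/
def IsSkewSSYT (τ τs : ℕ → ℕ) (t : ℕ → ℕ → ℕ) : Prop :=
  (∀ i j, InShape τ τs i j → 1 ≤ t i j) ∧
  (∀ i j, ¬ InShape τ τs i j → t i j = 0) ∧
  (∀ i j, InShape τ τs i j → InShape τ τs i (j + 1) → t i j ≤ t i (j + 1)) ∧
  (∀ i j, InShape τ τs i j → InShape τ τs (i + 1) j → t i j < t (i + 1) j)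

/-- The skew Schur function `s_{τ/τs}` as a power series in the variables `x_0, x_1, …`
(the tableau entry `k+1` corresponds to the variable `k`): the generating function of
semistandard tableaux of shape `τ/τs` counted by weight. -/
noncomputable def skewSchur (τ τs : ℕ → ℕ) : MvPowerSeries ℕ ℚ :=
  fun m : ℕ →₀ ℕ =>
    (Nat.card {t : ℕ → ℕ → ℕ // IsSkewSSYT τ τs t ∧
      ∀ k : ℕ, Set.ncard {p : ℕ × ℕ | t p.1 p.2 = k + 1} = m k} : ℚ)

/-- The Schur function `s_f` of a partition `f`. -/
noncomputable def schurPS (f : ℕ → ℕ) : MvPowerSeries ℕ ℚ := skewSchur f (fun _ => 0)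

/-- The elementary symmetric function `e_k`. -/
noncomputable def eK (k : ℕ) : MvPowerSeries ℕ ℚ :=
  fun m : ℕ →₀ ℕ => if (∀ i, m i ≤ 1) ∧ (m.sum fun _ v => v) = k then 1 else 0

/-- The complete homogeneous symmetric function `h_k`. -/
noncomputable def hK (k : ℕ) : MvPowerSeries ℕ ℚ :=
  fun m : ℕ →₀ ℕ => if (m.sum fun _ v => v) = k then 1 else 0
/-- `colCount t e j`: the number of entries equal to `e` in column `j` of `t`. -/
noncomputable def colCount (t : ℕ → ℕ → ℕ) (e j : ℕ) : ℕ :=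
  Set.ncard {i : ℕ | t i j = e}

/-- The colexicographic order on tableaux with positive entries: `s < t` iff, considering
the largest entry `e` whose column multiplicities differ, in the rightmost column `j`
where the multiplicity of `e` differs, the multiplicity is smaller in `s`. -/
def ColexLt (s t : ℕ → ℕ → ℕ) : Prop :=
  ∃ e j : ℕ, 1 ≤ e ∧ colCount s e j < colCount t e j ∧
    (∀ j' : ℕ, j < j' → colCount s e j' = colCount t e j') ∧
    (∀ e' j' : ℕ, e < e' → colCount s e' j' = colCount t e' j')

/-- A plethystic semistandard tableau of outer shape `ρ` and inner shape `τ/τs` (all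
entries positive): each outer box carries a semistandard inner tableau, the inner tableaux
weakly increase along outer rows and strictly increase down outer columns with respect to
the colexicographic order. -/
def IsPlethSSYT (ρ τ τs : ℕ → ℕ) (P : ℕ → ℕ → ℕ → ℕ → ℕ) : Prop :=
  (∀ a b, b < ρ a → IsSkewSSYT τ τs (P a b)) ∧
  (∀ a b, ¬ b < ρ a → P a b = fun _ _ => 0) ∧
  (∀ a b, b + 1 < ρ a → (ColexLt (P a b) (P a (b + 1)) ∨ P a b = P a (b + 1))) ∧
  (∀ a b, b < ρ a → b < ρ (a + 1) → ColexLt (P a b) (P (a + 1) b))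

/-- The number of entries equal to `k+1` in a plethystic tableau. -/
noncomputable def plethWeight (P : ℕ → ℕ → ℕ → ℕ → ℕ) (k : ℕ) : ℕ :=
  Set.ncard {q : (ℕ × ℕ) × ℕ × ℕ | P q.1.1 q.1.2 q.2.1 q.2.2 = k + 1}

/-- The plethysm `s_ρ ∘ s_{τ/τs}`: the generating function of plethystic semistandard
tableaux of outer shape `ρ` and inner shape `τ/τs` counted by weight. -/
noncomputable def plethysmPS (ρ τ τs : ℕ → ℕ) : MvPowerSeries ℕ ℚ :=
  fun m : ℕ →₀ ℕ =>
    (Nat.card {P : ℕ → ℕ → ℕ → ℕ → ℕ //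
      IsPlethSSYT ρ τ τs P ∧ ∀ k : ℕ, plethWeight P k = m k} : ℚ)

/-- The outer shape `(M, M, M, M)`. -/
def outer4 (M : ℕ) : ℕ → ℕ := fun i => if i < 4 then M else 0

/-- The inner shape `(2, 1)`. -/
def mu21 : ℕ → ℕ := fun i => if i = 0 then 2 else if i = 1 then 1 else 0

/-- The weight `(6M, 4M, 2M)`. -/
def w642 (M : ℕ) : ℕ → ℕ :=
  fun i => if i = 0 then 6 * M else if i = 1 then 4 * M else if i = 2 then 2 * M else 0

-- ### inner tableaux as triples
def mk3 (v : ℕ × ℕ × ℕ) : ℕ → ℕ → ℕ := fun i j =>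
  if i = 0 ∧ j = 0 then v.1 else if i = 0 ∧ j = 1 then v.2.1
  else if i = 1 ∧ j = 0 then v.2.2 else 0

lemma inShape_mu21 (i j : ℕ) : InShape mu21 (fun _ => 0) i j ↔ (i = 0 ∧ j < 2) ∨ (i = 1 ∧ j = 0) := by
  unfold InShape mu21
  rcases i with _|_|i <;> simp <;> omega

def validT (v : ℕ × ℕ × ℕ) : Prop :=
  1 ≤ v.1 ∧ v.1 ≤ v.2.1 ∧ v.1 < v.2.2 ∧ v.2.1 ≤ 3 ∧ v.2.2 ≤ 3

instance : DecidablePred validT := fun v => by unfold validT; infer_instance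

lemma ssyt_mk3 (v : ℕ × ℕ × ℕ) (h1 : 1 ≤ v.1) (h2 : v.1 ≤ v.2.1) (h3 : v.1 < v.2.2) :
    IsSkewSSYT mu21 (fun _ => 0) (mk3 v) := by
  refine ⟨?_, ?_, ?_, ?_⟩
  · intro i j h; rw [inShape_mu21] at h
    rcases h with ⟨rfl, hj⟩ | ⟨rfl, rfl⟩
    · interval_cases j <;> simp [mk3] <;> omega
    · simp [mk3]; omega
  · intro i j h; rw [inShape_mu21] at h
    simp only [mk3]
    split
    · exact absurd (Or.inl ⟨(by omega), (by omega)⟩) h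
    · split
      · next h1' h2' => exact absurd (Or.inl ⟨h2'.1, by omega⟩) h
      · split
        · next _ _ h3' => exact absurd (Or.inr ⟨h3'.1, h3'.2⟩) h
        · rfl
  · intro i j ha hb; rw [inShape_mu21] at ha hb
    rcases hb with ⟨rfl, hj⟩ | ⟨rfl, hj⟩ <;> [skip; omega]
    have : j = 0 := by omega
    subst this; simpa [mk3] using h2
  · intro i j ha hb; rw [inShape_mu21] at ha hb
    rcases ha with ⟨rfl, hj⟩ | ⟨rfl, hj⟩
    · rcases hb with ⟨h, _⟩ | ⟨_, rfl⟩
      · omega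
      · simpa [mk3] using h3
    · rcases hb with ⟨h, _⟩ | ⟨h, _⟩ <;> omega

lemma mk3_eq_of_ssyt (t : ℕ → ℕ → ℕ) (h : IsSkewSSYT mu21 (fun _ => 0) t) :
    t = mk3 (t 0 0, t 0 1, t 1 0) := by
  funext i j
  by_cases hs : InShape mu21 (fun _ => 0) i j
  · rw [inShape_mu21] at hs
    rcases hs with ⟨rfl, hj⟩ | ⟨rfl, rfl⟩
    · interval_cases j <;> simp [mk3]
    · simp [mk3]
  · rw [h.2.1 i j hs]
    rw [inShape_mu21] at hs
    simp only [mk3]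
    split
    · next h' => exact absurd (Or.inl ⟨h'.1, by omega⟩) hs
    · split
      · next _ h' => exact absurd (Or.inl ⟨h'.1, by omega⟩) hs
      · split
        · next _ _ h' => exact absurd (Or.inr ⟨h'.1, h'.2⟩) hs
        · rfl
open Finset

def cc (v : ℕ × ℕ × ℕ) (e j : ℕ) : ℕ :=
  if j = 0 then (if v.1 = e then 1 else 0) + (if v.2.2 = e then 1 else 0)
  else if j = 1 then (if v.2.1 = e then 1 else 0) else 0

lemma colCount_mk3 (v : ℕ × ℕ × ℕ) (e : ℕ) (he : 1 ≤ e) (j : ℕ) :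
    colCount (mk3 v) e j = cc v e j := by
  unfold colCount cc
  rcases j with _|_|j
  · by_cases hx : v.1 = e <;> by_cases hz : v.2.2 = e
    · have : {i : ℕ | mk3 v i 0 = e} = {0, 1} := by
        ext i; rcases i with _|_|i <;> simp [mk3, hx, hz] <;> omega
      rw [this, Set.ncard_pair (by omega : (0:ℕ) ≠ 1)]; simp [hx, hz]
    · have : {i : ℕ | mk3 v i 0 = e} = {0} := by
        ext i; rcases i with _|_|i <;> simp [mk3, hx, hz] <;> omega
      rw [this, Set.ncard_singleton]; simp [hx, hz]
    · have : {i : ℕ | mk3 v i 0 = e} = {1} := by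
        ext i; rcases i with _|_|i <;> simp [mk3, hx, hz] <;> omega
      rw [this, Set.ncard_singleton]; simp [hx, hz]
    · have : {i : ℕ | mk3 v i 0 = e} = ∅ := by
        ext i; rcases i with _|_|i <;> simp [mk3, hx, hz] <;> omega
      rw [this, Set.ncard_empty]; simp [hx, hz]
  · by_cases hy : v.2.1 = e
    · have : {i : ℕ | mk3 v i 1 = e} = {0} := by
        ext i; rcases i with _|_|i <;> simp [mk3, hy] <;> omega
      rw [this, Set.ncard_singleton]; simp [hy]
    · have : {i : ℕ | mk3 v i 1 = e} = ∅ := by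
        ext i; rcases i with _|_|i <;> simp [mk3, hy] <;> omega
      rw [this, Set.ncard_empty]; simp [hy]
  · have : {i : ℕ | mk3 v i (j+2) = e} = ∅ := by
      ext i; simp [mk3]; omega
    rw [this, Set.ncard_empty]; simp

def CLT (s t : ℕ × ℕ × ℕ) : Prop :=
  ∃ e ∈ Finset.Icc 1 3, ∃ j ∈ Finset.range 2,
    cc s e j < cc t e j ∧ (∀ j' ∈ Finset.Ioc j 1, cc s e j' = cc t e j') ∧
    (∀ e' ∈ Finset.Ioc e 3, ∀ j' ∈ Finset.range 2, cc s e' j' = cc t e' j')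

instance (s t : ℕ×ℕ×ℕ) : Decidable (CLT s t) := by unfold CLT; infer_instance

def bnd3 (v : ℕ × ℕ × ℕ) : Prop := v.1 ≤ 3 ∧ v.2.1 ≤ 3 ∧ v.2.2 ≤ 3

lemma cc_zero_of_gt (v : ℕ × ℕ × ℕ) (hb : bnd3 v) {e j : ℕ} (h : 3 < e ∨ 2 ≤ j) :
    cc v e j = 0 := by
  obtain ⟨h1, h2, h3⟩ := hb
  unfold cc
  rcases h with h | h
  · split
    · split <;> split <;> omega
    · split
      · split <;> omega
      · rfl
  · split
    · omega
    · split <;> omega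

lemma colex_iff (s t : ℕ × ℕ × ℕ) (hs : bnd3 s) (ht : bnd3 t) :
    ColexLt (mk3 s) (mk3 t) ↔ CLT s t := by
  constructor
  · rintro ⟨e, j, he1, hlt, hj, he⟩
    rw [colCount_mk3 s e he1, colCount_mk3 t e he1] at hlt
    have he3 : e ≤ 3 := by
      by_contra h
      rw [cc_zero_of_gt t ht (Or.inl (by omega))] at hlt; omega
    have hj1 : j ≤ 1 := by
      by_contra h
      rw [cc_zero_of_gt t ht (Or.inr (by omega))] at hlt; omega
    refine ⟨e, Finset.mem_Icc.2 ⟨he1, he3⟩, j, Finset.mem_range.2 (by omega), hlt, ?_, ?_⟩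
    · intro j' hj'
      rw [Finset.mem_Ioc] at hj'
      have := hj j' hj'.1
      rwa [colCount_mk3 s e he1, colCount_mk3 t e he1] at this
    · intro e' he' j' hj'
      rw [Finset.mem_Ioc] at he'
      have := he e' j' he'.1
      rwa [colCount_mk3 s e' (by omega), colCount_mk3 t e' (by omega)] at this
  · rintro ⟨e, hee, j, hjj, hlt, hj, he⟩
    rw [Finset.mem_Icc] at hee
    rw [Finset.mem_range] at hjj
    refine ⟨e, j, hee.1, ?_, ?_, ?_⟩
    · rw [colCount_mk3 s e hee.1, colCount_mk3 t e hee.1]; exact hlt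
    · intro j' hj'
      rw [colCount_mk3 s e hee.1, colCount_mk3 t e hee.1]
      by_cases h2 : j' ≤ 1
      · exact hj j' (Finset.mem_Ioc.2 ⟨hj', h2⟩)
      · rw [cc_zero_of_gt s hs (Or.inr (by omega)), cc_zero_of_gt t ht (Or.inr (by omega))]
    · intro e' j' he'
      have h1e' : 1 ≤ e' := by omega
      rw [colCount_mk3 s e' h1e', colCount_mk3 t e' h1e']
      by_cases h2 : e' ≤ 3 ∧ j' ≤ 1
      · exact he e' (Finset.mem_Ioc.2 ⟨he', h2.1⟩) j' (Finset.mem_range.2 (by omega))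
      · rcases not_and_or.1 h2 with h | h
        · rw [cc_zero_of_gt s hs (Or.inl (by omega)), cc_zero_of_gt t ht (Or.inl (by omega))]
        · rw [cc_zero_of_gt s hs (Or.inr (by omega)), cc_zero_of_gt t ht (Or.inr (by omega))]

-- number of entries equal to e in triple v
def wt3 (v : ℕ × ℕ × ℕ) (e : ℕ) : ℕ :=
  (if v.1 = e then 1 else 0) + (if v.2.1 = e then 1 else 0) + (if v.2.2 = e then 1 else 0)

def tA : ℕ × ℕ × ℕ := (1,1,2)
def tB : ℕ × ℕ × ℕ := (1,1,3)
def tC : ℕ × ℕ × ℕ := (1,2,2)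
def tD : ℕ × ℕ × ℕ := (1,2,3)
def tE : ℕ × ℕ × ℕ := (1,3,2)

def V8 : Finset (ℕ × ℕ × ℕ) := {(1,1,2),(1,1,3),(1,2,2),(1,2,3),(1,3,2),(1,3,3),(2,2,3),(2,3,3)}

lemma validT_mem (v : ℕ × ℕ × ℕ) (h : validT v) : v ∈ V8 := by
  obtain ⟨x, y, z⟩ := v
  obtain ⟨h1, h2, h3, h4, h5⟩ := h
  simp only [] at h1 h2 h3 h4 h5
  have hx3 : x ≤ 3 := le_trans h2 h4
  interval_cases x <;> interval_cases y <;> interval_cases z <;> first | decide | omega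

lemma chain4a : ∀ v0 ∈ V8, ∀ v1 ∈ V8, ∀ v2 ∈ V8, ∀ v3 ∈ V8,
    CLT v0 v1 → CLT v1 v2 → CLT v2 v3 →
    wt3 v0 1 + wt3 v1 1 + wt3 v2 1 + wt3 v3 1 ≤ 6 := by decide

lemma chain4b : ∀ v0 ∈ V8, ∀ v1 ∈ V8, ∀ v2 ∈ V8, ∀ v3 ∈ V8,
    CLT v0 v1 → CLT v1 v2 → CLT v2 v3 →
    2 ≤ wt3 v0 3 + wt3 v1 3 + wt3 v2 3 + wt3 v3 3 := by decide

lemma chain4c0 : ∀ v0 ∈ V8, ∀ v1 ∈ V8, ∀ v2 ∈ V8, ∀ v3 ∈ V8,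
    CLT v0 v1 → CLT v1 v2 → CLT v2 v3 →
    wt3 v0 1 + wt3 v1 1 + wt3 v2 1 + wt3 v3 1 = 6 →
    wt3 v0 3 + wt3 v1 3 + wt3 v2 3 + wt3 v3 3 = 2 →
    v0 = tA ∧ v1 = tC ∧ v2 = tB := by decide

lemma chain4c1 : ∀ v0 ∈ V8, ∀ v1 ∈ V8, ∀ v2 ∈ V8, ∀ v3 ∈ V8,
    CLT v0 v1 → CLT v1 v2 → CLT v2 v3 →
    wt3 v0 1 + wt3 v1 1 + wt3 v2 1 + wt3 v3 1 = 6 →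
    wt3 v0 3 + wt3 v1 3 + wt3 v2 3 + wt3 v3 3 = 2 →
    v3 = tD ∨ v3 = tE := by decide

lemma cltAC : CLT tA tC := by decide
lemma cltCB : CLT tC tB := by decide
lemma cltBD : CLT tB tD := by decide
lemma cltBE : CLT tB tE := by decide
lemma cltDE : CLT tD tE := by decide
lemma ncltED : ¬ CLT tE tD := by decide
lemma validA : validT tA := by decide
lemma validB : validT tB := by decide
lemma validC : validT tC := by decide
lemma validD : validT tD := by decide
lemma validE : validT tE := by decide
lemma bndA : bnd3 tA := by unfold bnd3; decide
lemma bndB : bnd3 tB := by unfold bnd3; decide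
lemma bndC : bnd3 tC := by unfold bnd3; decide
lemma bndD : bnd3 tD := by unfold bnd3; decide
lemma bndE : bnd3 tE := by unfold bnd3; decide

def tup (P : ℕ → ℕ → ℕ → ℕ → ℕ) (a b : ℕ) : ℕ × ℕ × ℕ := (P a b 0 0, P a b 0 1, P a b 1 0)

lemma outer4_lt {M a b : ℕ} : b < outer4 M a ↔ a < 4 ∧ b < M := by
  unfold outer4; split <;> omega

def box3 : Finset (ℕ × ℕ) := {(0,0),(0,1),(1,0)}

lemma mem_box3_of_inShape {i j : ℕ} (h : InShape mu21 (fun _ => 0) i j) : (i, j) ∈ box3 := by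
  rw [inShape_mu21] at h
  rcases h with ⟨rfl, hj⟩ | ⟨rfl, rfl⟩
  · interval_cases j <;> decide
  · decide

lemma pleth_box (M : ℕ) (P : ℕ → ℕ → ℕ → ℕ → ℕ)
    (hP : IsPlethSSYT (outer4 M) mu21 (fun _ => 0) P) {a b i j v : ℕ}
    (hv : P a b i j = v) (hv0 : v ≠ 0) :
    a < 4 ∧ b < M ∧ (i, j) ∈ box3 := by
  have hb : b < outer4 M a := by
    by_contra h
    have := hP.2.1 a b h
    rw [this] at hv
    exact hv0 hv.symm
  have hsh : InShape mu21 (fun _ => 0) i j := by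
    by_contra h
    have := (hP.1 a b hb).2.1 i j h
    rw [this] at hv
    exact hv0 hv.symm
  exact ⟨(outer4_lt.1 hb).1, (outer4_lt.1 hb).2, mem_box3_of_inShape hsh⟩

lemma plethWeight_eq (M : ℕ) (P : ℕ → ℕ → ℕ → ℕ → ℕ)
    (hP : IsPlethSSYT (outer4 M) mu21 (fun _ => 0) P) (k : ℕ) :
    plethWeight P k = ∑ b ∈ Finset.range M, ∑ a ∈ Finset.range 4, wt3 (tup P a b) (k + 1) := by
  classical
  set F : Finset ((ℕ × ℕ) × ℕ × ℕ) := (Finset.range 4 ×ˢ Finset.range M) ×ˢ box3 with hF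
  have hS : {q : (ℕ × ℕ) × ℕ × ℕ | P q.1.1 q.1.2 q.2.1 q.2.2 = k + 1} =
      ↑(F.filter fun q => P q.1.1 q.1.2 q.2.1 q.2.2 = k + 1) := by
    ext ⟨⟨a, b⟩, i, j⟩
    simp only [Set.mem_setOf_eq, Finset.coe_filter, Finset.mem_product, hF,
      Finset.mem_range]
    constructor
    · intro h
      obtain ⟨h1, h2, h3⟩ := pleth_box M P hP h (by omega)
      exact ⟨⟨⟨h1, h2⟩, h3⟩, h⟩
    · exact fun h => h.2
  rw [plethWeight, hS, Set.ncard_coe_finset, Finset.card_filter]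
  rw [Finset.sum_product, Finset.sum_product]
  rw [Finset.sum_comm]
  refine Finset.sum_congr rfl fun b _ => Finset.sum_congr rfl fun a _ => ?_
  show ∑ p ∈ box3, (if P a b p.1 p.2 = k + 1 then 1 else 0) = wt3 (tup P a b) (k + 1)
  rw [show box3 = {(0,0),(0,1),(1,0)} from rfl]
  rw [Finset.sum_insert (by decide), Finset.sum_insert (by decide), Finset.sum_singleton]
  simp only [wt3, tup, add_assoc]
  congr

lemma entries_le3 (M : ℕ) (P : ℕ → ℕ → ℕ → ℕ → ℕ)
    (hP : IsPlethSSYT (outer4 M) mu21 (fun _ => 0) P)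
    (hz : ∀ k, 3 ≤ k → plethWeight P k = 0) :
    ∀ a b i j, P a b i j ≤ 3 := by
  intro a b i j
  by_contra h
  push_neg at h
  set v := P a b i j with hv
  obtain ⟨h1, h2, h3⟩ := pleth_box M P hP hv.symm (by omega)
  have h0 : plethWeight P (v - 1) = 0 := hz _ (by omega)
  rw [plethWeight_eq M P hP] at h0
  have hb : wt3 (tup P a b) (v - 1 + 1) = 0 := by
    have := (Finset.sum_eq_zero_iff.1 h0) b (Finset.mem_range.2 h2)
    exact (Finset.sum_eq_zero_iff.1 this) a (Finset.mem_range.2 h1)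
  have hvv : v - 1 + 1 = v := by omega
  rw [hvv] at hb
  unfold wt3 tup at hb
  rw [show box3 = {(0,0),(0,1),(1,0)} from rfl] at h3
  simp only [Finset.mem_insert, Finset.mem_singleton, Prod.mk.injEq] at h3
  rcases h3 with ⟨rfl, rfl⟩ | ⟨rfl, rfl⟩ | ⟨rfl, rfl⟩ <;> simp [← hv] at hb <;> omega

lemma bnd3_of_validT {v : ℕ × ℕ × ℕ} (h : validT v) : bnd3 v :=
  ⟨le_trans h.2.1 h.2.2.2.1, h.2.2.2.1, h.2.2.2.2⟩

lemma mk3_tup (v : ℕ × ℕ × ℕ) : tup (fun _ _ => mk3 v) 0 0 = v := by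
  obtain ⟨x, y, z⟩ := v; simp [tup, mk3]

lemma tup_mk3 (P : ℕ → ℕ → ℕ → ℕ → ℕ) (a b : ℕ) (v : ℕ × ℕ × ℕ) (h : P a b = mk3 v) :
    tup P a b = v := by
  obtain ⟨x, y, z⟩ := v; simp [tup, h, mk3]

lemma tup_valid (M : ℕ) (P : ℕ → ℕ → ℕ → ℕ → ℕ)
    (hP : IsPlethSSYT (outer4 M) mu21 (fun _ => 0) P)
    (hle : ∀ a b i j, P a b i j ≤ 3) {a b : ℕ} (ha : a < 4) (hb : b < M) :
    validT (tup P a b) ∧ P a b = mk3 (tup P a b) := by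
  have hss := hP.1 a b (outer4_lt.2 ⟨ha, hb⟩)
  refine ⟨⟨?_, ?_, ?_, ?_, ?_⟩, mk3_eq_of_ssyt _ hss⟩
  · exact hss.1 0 0 ((inShape_mu21 0 0).2 (Or.inl ⟨rfl, by omega⟩))
  · exact hss.2.2.1 0 0 ((inShape_mu21 0 0).2 (Or.inl ⟨rfl, by omega⟩))
      ((inShape_mu21 0 1).2 (Or.inl ⟨rfl, by omega⟩))
  · exact hss.2.2.2 0 0 ((inShape_mu21 0 0).2 (Or.inl ⟨rfl, by omega⟩))
      ((inShape_mu21 1 0).2 (Or.inr ⟨rfl, rfl⟩))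
  · exact hle a b 0 1
  · exact hle a b 1 0

lemma col_chain (M : ℕ) (P : ℕ → ℕ → ℕ → ℕ → ℕ)
    (hP : IsPlethSSYT (outer4 M) mu21 (fun _ => 0) P)
    (hle : ∀ a b i j, P a b i j ≤ 3) {a b : ℕ} (ha : a < 3) (hb : b < M) :
    CLT (tup P a b) (tup P (a + 1) b) := by
  have h1 := tup_valid M P hP hle (show a < 4 by omega) hb
  have h2 := tup_valid M P hP hle (show a + 1 < 4 by omega) hb
  have hc := hP.2.2.2 a b (outer4_lt.2 ⟨by omega, hb⟩) (outer4_lt.2 ⟨by omega, hb⟩)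
  rw [h1.2, h2.2] at hc
  exact (colex_iff _ _ (bnd3_of_validT h1.1) (bnd3_of_validT h2.1)).1 hc

lemma col_bounds (M : ℕ) (P : ℕ → ℕ → ℕ → ℕ → ℕ)
    (hP : IsPlethSSYT (outer4 M) mu21 (fun _ => 0) P)
    (hle : ∀ a b i j, P a b i j ≤ 3) {b : ℕ} (hb : b < M) :
    (∑ a ∈ Finset.range 4, wt3 (tup P a b) 1 ≤ 6) ∧
    (2 ≤ ∑ a ∈ Finset.range 4, wt3 (tup P a b) 3) ∧
    ((∑ a ∈ Finset.range 4, wt3 (tup P a b) 1 = 6) →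
     (∑ a ∈ Finset.range 4, wt3 (tup P a b) 3 = 2) →
     tup P 0 b = tA ∧ tup P 1 b = tC ∧ tup P 2 b = tB ∧
       (tup P 3 b = tD ∨ tup P 3 b = tE)) := by
  have m0 := validT_mem _ (tup_valid M P hP hle (by omega : (0:ℕ) < 4) hb).1
  have m1 := validT_mem _ (tup_valid M P hP hle (by omega : (1:ℕ) < 4) hb).1
  have m2 := validT_mem _ (tup_valid M P hP hle (by omega : (2:ℕ) < 4) hb).1
  have m3 := validT_mem _ (tup_valid M P hP hle (by omega : (3:ℕ) < 4) hb).1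
  have c0 := col_chain M P hP hle (by omega : (0:ℕ) < 3) hb
  have c1 := col_chain M P hP hle (by omega : (1:ℕ) < 3) hb
  have c2 := col_chain M P hP hle (by omega : (2:ℕ) < 3) hb
  have hsum : ∀ e, ∑ a ∈ Finset.range 4, wt3 (tup P a b) e =
      wt3 (tup P 0 b) e + wt3 (tup P 1 b) e + wt3 (tup P 2 b) e + wt3 (tup P 3 b) e := by
    intro e; simp [Finset.sum_range_succ]
  rw [hsum 1, hsum 3]
  refine ⟨chain4a _ m0 _ m1 _ m2 _ m3 c0 c1 c2, chain4b _ m0 _ m1 _ m2 _ m3 c0 c1 c2,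
    fun h1 h3 => ?_⟩
  obtain ⟨e0, e1, e2⟩ := chain4c0 _ m0 _ m1 _ m2 _ m3 c0 c1 c2 h1 h3
  exact ⟨e0, e1, e2, chain4c1 _ m0 _ m1 _ m2 _ m3 c0 c1 c2 h1 h3⟩

lemma pw_bounds (M : ℕ) (P : ℕ → ℕ → ℕ → ℕ → ℕ)
    (hP : IsPlethSSYT (outer4 M) mu21 (fun _ => 0) P)
    (hz : ∀ k, 3 ≤ k → plethWeight P k = 0) :
    plethWeight P 0 ≤ 6 * M ∧ 2 * M ≤ plethWeight P 2 := by
  have hle := entries_le3 M P hP hz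
  constructor
  · rw [plethWeight_eq M P hP]
    calc ∑ b ∈ Finset.range M, ∑ a ∈ Finset.range 4, wt3 (tup P a b) 1
        ≤ ∑ _b ∈ Finset.range M, 6 :=
          Finset.sum_le_sum fun b hb => (col_bounds M P hP hle (Finset.mem_range.1 hb)).1
      _ = 6 * M := by simp [mul_comm]
  · rw [plethWeight_eq M P hP]
    calc 2 * M = ∑ _b ∈ Finset.range M, 2 := by simp [mul_comm]
      _ ≤ ∑ b ∈ Finset.range M, ∑ a ∈ Finset.range 4, wt3 (tup P a b) 3 :=
          Finset.sum_le_sum fun b hb => (col_bounds M P hP hle (Finset.mem_range.1 hb)).2.1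

lemma w642_ge3 (M k : ℕ) (hk : 3 ≤ k) : w642 M k = 0 := by
  unfold w642; split <;> [omega; split <;> [omega; split <;> [omega; rfl]]]

lemma sum_all_eq_of_le {M c : ℕ} (f : ℕ → ℕ) (hle : ∀ b < M, f b ≤ c)
    (hsum : ∑ b ∈ Finset.range M, f b = c * M) : ∀ b < M, f b = c := by
  intro b hb
  by_contra h
  have hlt : ∑ b ∈ Finset.range M, f b < ∑ _b ∈ Finset.range M, c :=
    Finset.sum_lt_sum (fun i hi => hle i (Finset.mem_range.1 hi))
      ⟨b, Finset.mem_range.2 hb, by have := hle b hb; omega⟩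
  rw [Finset.sum_const, Finset.card_range, smul_eq_mul, hsum, mul_comm] at hlt
  exact lt_irrefl _ hlt

lemma sum_all_eq_of_ge {M c : ℕ} (f : ℕ → ℕ) (hge : ∀ b < M, c ≤ f b)
    (hsum : ∑ b ∈ Finset.range M, f b = c * M) : ∀ b < M, f b = c := by
  intro b hb
  by_contra h
  have hlt : ∑ _b ∈ Finset.range M, c < ∑ b ∈ Finset.range M, f b :=
    Finset.sum_lt_sum (fun i hi => hge i (Finset.mem_range.1 hi))
      ⟨b, Finset.mem_range.2 hb, by have := hge b hb; omega⟩
  rw [Finset.sum_const, Finset.card_range, smul_eq_mul, hsum, mul_comm] at hlt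
  exact lt_irrefl _ hlt

lemma initseg {M : ℕ} (p : ℕ → Prop) [DecidablePred p] (hmono : ∀ b, b + 1 < M → p (b + 1) → p b) :
    ∀ b < M, (p b ↔ b < ((Finset.range M).filter p).card) := by
  have seg : ∀ d b, b + d < M → p (b + d) → p b := by
    intro d
    induction d with
    | zero => intro b h hp; exact hp
    | succ n ih =>
      intro b h hp
      exact ih b (by omega) (hmono (b + n) (by omega) hp)
  intro b hb
  constructor
  · intro hp
    have hsub : Finset.range (b + 1) ⊆ (Finset.range M).filter p := by
      intro b' hb'
      rw [Finset.mem_range] at hb'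
      refine Finset.mem_filter.2 ⟨Finset.mem_range.2 (by omega), ?_⟩
      exact seg (b - b') b' (by omega) (by rwa [show b' + (b - b') = b by omega])
    have := Finset.card_le_card hsub
    simp at this
    omega
  · intro hL
    by_contra hp
    have hsub : (Finset.range M).filter p ⊆ Finset.range b := by
      intro b' hb'
      obtain ⟨hb'M, hpb'⟩ := Finset.mem_filter.1 hb'
      rw [Finset.mem_range] at hb'M ⊢
      by_contra h
      exact hp (seg (b' - b) b (by omega) (by rwa [show b + (b' - b) = b' by omega]))
    have := Finset.card_le_card hsub
    simp at this
    omega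

def colTup (L a b : ℕ) : ℕ × ℕ × ℕ :=
  if a = 0 then tA else if a = 1 then tC else if a = 2 then tB
  else if b < L then tD else tE

def PL (M L : ℕ) : ℕ → ℕ → ℕ → ℕ → ℕ := fun a b =>
  if a < 4 ∧ b < M then mk3 (colTup L a b) else fun _ _ => 0

lemma PL_eq {M L a b : ℕ} (ha : a < 4) (hb : b < M) : PL M L a b = mk3 (colTup L a b) := by
  unfold PL; rw [if_pos ⟨ha, hb⟩]

lemma colTup3 (L b : ℕ) : colTup L 3 b = if b < L then tD else tE := rfl

lemma classify (M : ℕ) (P : ℕ → ℕ → ℕ → ℕ → ℕ)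
    (hP : IsPlethSSYT (outer4 M) mu21 (fun _ => 0) P)
    (hw : ∀ k, plethWeight P k = w642 M k) :
    ∃ L ≤ M, P = PL M L := by
  classical
  have hz : ∀ k, 3 ≤ k → plethWeight P k = 0 := fun k hk => by
    rw [hw k, w642_ge3 M k hk]
  have hle := entries_le3 M P hP hz
  have h0 : ∑ b ∈ Finset.range M, ∑ a ∈ Finset.range 4, wt3 (tup P a b) 1 = 6 * M := by
    rw [← plethWeight_eq M P hP, hw 0]; rfl
  have h2 : ∑ b ∈ Finset.range M, ∑ a ∈ Finset.range 4, wt3 (tup P a b) 3 = 2 * M := by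
    rw [← plethWeight_eq M P hP, hw 2]; rfl
  have hcol1 : ∀ b < M, ∑ a ∈ Finset.range 4, wt3 (tup P a b) 1 = 6 :=
    sum_all_eq_of_le _ (fun b hb => (col_bounds M P hP hle hb).1) h0
  have hcol3 : ∀ b < M, ∑ a ∈ Finset.range 4, wt3 (tup P a b) 3 = 2 :=
    sum_all_eq_of_ge _ (fun b hb => (col_bounds M P hP hle hb).2.1) h2
  have hclass : ∀ b < M, tup P 0 b = tA ∧ tup P 1 b = tC ∧ tup P 2 b = tB ∧
      (tup P 3 b = tD ∨ tup P 3 b = tE) := fun b hb =>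
    (col_bounds M P hP hle hb).2.2 (hcol1 b hb) (hcol3 b hb)
  -- the predicate "column b is of type S"
  set p : ℕ → Prop := fun b => tup P 3 b = tD with hp
  have hmono : ∀ b, b + 1 < M → p (b + 1) → p b := by
    intro b hb hpb1
    have hb' : b < M := by omega
    rcases (hclass b hb').2.2.2 with h | h
    · exact h
    · exfalso
      have hrow := hP.2.2.1 3 b (outer4_lt.2 ⟨by omega, hb⟩)
      have e1 : P 3 b = mk3 tE := by
        rw [(tup_valid M P hP hle (by omega) hb').2, h]
      have e2 : P 3 (b + 1) = mk3 tD := by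
        rw [(tup_valid M P hP hle (by omega) (by omega)).2, hpb1]
      rw [e1, e2] at hrow
      rcases hrow with hc | hc
      · exact ncltED ((colex_iff _ _ (bnd3_of_validT validE) (bnd3_of_validT validD)).1 hc)
      · have := congrFun (congrFun hc 0) 1
        simp [mk3, tD, tE] at this
  refine ⟨((Finset.range M).filter p).card, le_trans (Finset.card_filter_le _ _) (by simp), ?_⟩
  have hiff := initseg p hmono
  funext a b
  by_cases hab : a < 4 ∧ b < M
  · obtain ⟨ha, hb⟩ := hab
    have heq := (tup_valid M P hP hle ha hb).2
    rw [PL_eq ha hb]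
    obtain ⟨e0, e1, e2, e3⟩ := hclass b hb
    interval_cases a
    · rw [heq, e0]; rfl
    · rw [heq, e1]; rfl
    · rw [heq, e2]; rfl
    · rw [heq, colTup3]
      by_cases hbL : b < ((Finset.range M).filter p).card
      · have hpb : p b := (hiff b hb).2 hbL
        rw [hp] at hpb
        rw [hpb, if_pos hbL]
      · have hnpb : ¬ p b := fun hpb => hbL ((hiff b hb).1 hpb)
        rcases e3 with h | h
        · exact absurd h hnpb
        · rw [h, if_neg hbL]
  · rw [hP.2.1 a b (fun hlt => hab (outer4_lt.1 hlt)), PL, if_neg hab]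

lemma wt3_zero {v : ℕ × ℕ × ℕ} (h : bnd3 v) {e : ℕ} (he : 4 ≤ e) : wt3 v e = 0 := by
  obtain ⟨h1, h2, h3⟩ := h
  unfold wt3
  split_ifs <;> omega

lemma colTup_valid (L a b : ℕ) : validT (colTup L a b) := by
  unfold colTup
  split_ifs <;> first
    | exact validA | exact validC | exact validB | exact validD | exact validE

lemma PL_valid (M L : ℕ) : IsPlethSSYT (outer4 M) mu21 (fun _ => 0) (PL M L) := by
  refine ⟨?_, ?_, ?_, ?_⟩
  · intro a b hb
    obtain ⟨ha, hbM⟩ := outer4_lt.1 hb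
    rw [PL_eq ha hbM]
    have h := colTup_valid L a b
    exact ssyt_mk3 _ h.1 h.2.1 h.2.2.1
  · intro a b hb
    rw [PL, if_neg (fun h => hb (outer4_lt.2 h))]
  · intro a b hb
    obtain ⟨ha, hbM⟩ := outer4_lt.1 hb
    have hb1 : b < M := by omega
    rw [PL_eq ha hb1, PL_eq ha hbM]
    interval_cases a
    · exact Or.inr rfl
    · exact Or.inr rfl
    · exact Or.inr rfl
    · rw [colTup3, colTup3]
      by_cases h1 : b < L <;> by_cases h2 : b + 1 < L
      · rw [if_pos h1, if_pos h2]; exact Or.inr rfl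
      · rw [if_pos h1, if_neg h2]
        exact Or.inl ((colex_iff _ _ (bnd3_of_validT validD) (bnd3_of_validT validE)).2 cltDE)
      · omega
      · rw [if_neg h1, if_neg h2]; exact Or.inr rfl
  · intro a b hb hb1
    obtain ⟨ha, hbM⟩ := outer4_lt.1 hb
    obtain ⟨ha1, _⟩ := outer4_lt.1 hb1
    rw [PL_eq ha hbM, PL_eq ha1 hbM]
    have ha2 : a < 3 := by omega
    interval_cases a
    · exact (colex_iff _ _ (bnd3_of_validT validA) (bnd3_of_validT validC)).2 cltAC
    · exact (colex_iff _ _ (bnd3_of_validT validC) (bnd3_of_validT validB)).2 cltCB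
    · rw [colTup3]
      by_cases h1 : b < L
      · rw [if_pos h1]
        exact (colex_iff _ _ (bnd3_of_validT validB) (bnd3_of_validT validD)).2 cltBD
      · rw [if_neg h1]
        exact (colex_iff _ _ (bnd3_of_validT validB) (bnd3_of_validT validE)).2 cltBE

lemma wt3_DE (e : ℕ) : wt3 tD e = wt3 tE e := add_right_comm _ _ _

lemma PL_weight (M L : ℕ) (k : ℕ) : plethWeight (PL M L) k = w642 M k := by
  rw [plethWeight_eq M _ (PL_valid M L)]
  have hcol : ∀ b ∈ Finset.range M, ∑ a ∈ Finset.range 4, wt3 (tup (PL M L) a b) (k + 1) =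
      wt3 tA (k+1) + wt3 tC (k+1) + wt3 tB (k+1) + wt3 tD (k+1) := by
    intro b hb
    rw [Finset.mem_range] at hb
    have t0 : tup (PL M L) 0 b = tA := tup_mk3 _ _ _ _ (PL_eq (by omega) hb)
    have t1 : tup (PL M L) 1 b = tC := tup_mk3 _ _ _ _ (PL_eq (by omega) hb)
    have t2 : tup (PL M L) 2 b = tB := tup_mk3 _ _ _ _ (PL_eq (by omega) hb)
    have t3 : tup (PL M L) 3 b = colTup L 3 b := tup_mk3 _ _ _ _ (PL_eq (by omega) hb)
    rw [show (4:ℕ) = 3 + 1 from rfl, Finset.sum_range_succ, Finset.sum_range_succ,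
      Finset.sum_range_succ, Finset.sum_range_one, t0, t1, t2, t3, colTup3]
    congr 1
    by_cases h : b < L
    · rw [if_pos h]
    · rw [if_neg h, wt3_DE]
  rw [Finset.sum_congr rfl hcol, Finset.sum_const, Finset.card_range, smul_eq_mul]
  rcases k with _|_|_|k
  · rw [show wt3 tA 1 + wt3 tC 1 + wt3 tB 1 + wt3 tD 1 = 6 from by decide]
    unfold w642; rw [if_pos rfl, mul_comm]
  · rw [show wt3 tA 2 + wt3 tC 2 + wt3 tB 2 + wt3 tD 2 = 4 from by decide]
    unfold w642; norm_num [mul_comm]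
  · rw [show wt3 tA 3 + wt3 tC 3 + wt3 tB 3 + wt3 tD 3 = 2 from by decide]
    unfold w642; norm_num [mul_comm]
  · rw [wt3_zero (bnd3_of_validT validA) (by omega), wt3_zero (bnd3_of_validT validC) (by omega),
      wt3_zero (bnd3_of_validT validB) (by omega), wt3_zero (bnd3_of_validT validD) (by omega)]
    rw [w642_ge3 M _ (by omega)]
    simp

lemma PL_inj {M L L' : ℕ} (hL : L ≤ M) (hL' : L' ≤ M) (h : PL M L = PL M L') : L = L' := by
  by_contra hne
  wlog hlt : L < L' generalizing L L'
  · exact this hL' hL h.symm (Ne.symm hne) (by omega)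
  have hLM : L < M := by omega
  have h1 : PL M L 3 L = mk3 tE := by
    rw [PL_eq (by omega) hLM, colTup3, if_neg (lt_irrefl L)]
  have h2 : PL M L' 3 L = mk3 tD := by
    rw [PL_eq (by omega) hLM, colTup3, if_pos hlt]
  rw [h, h2] at h1
  have := congrFun (congrFun h1 0) 1
  simp [mk3, tD, tE] at this

lemma count_main (M : ℕ) :
    Nat.card {P : ℕ → ℕ → ℕ → ℕ → ℕ // IsPlethSSYT (outer4 M) mu21 (fun _ => 0) P ∧
      ∀ k, plethWeight P k = w642 M k} = M + 1 := by
  have hbij : Function.Bijective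
      (fun L : Fin (M + 1) =>
        (⟨PL M L.1, PL_valid M L.1, PL_weight M L.1⟩ :
          {P : ℕ → ℕ → ℕ → ℕ → ℕ // IsPlethSSYT (outer4 M) mu21 (fun _ => 0) P ∧
            ∀ k, plethWeight P k = w642 M k})) := by
    constructor
    · intro L L' h
      have := congrArg Subtype.val h
      exact Fin.ext (PL_inj (by omega) (by omega) this)
    · rintro ⟨P, hP, hw⟩
      obtain ⟨L, hL, rfl⟩ := classify M P hP hw
      exact ⟨⟨L, by omega⟩, rfl⟩
  rw [← Nat.card_eq_of_bijective _ hbij, Nat.card_eq_fintype_card, Fintype.card_fin]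

lemma part1 (M : ℕ) :
    Nat.card {P : ℕ → ℕ → ℕ → ℕ → ℕ //
      IsPlethSSYT (outer4 M) mu21 (fun _ => 0) P ∧
      plethWeight P 0 = 6 * M ∧ plethWeight P 1 = 4 * M ∧ plethWeight P 2 = 2 * M ∧
      ∀ k : ℕ, 3 ≤ k → plethWeight P k = 0} = M + 1 := by
  rw [← count_main M]
  apply Nat.card_congr
  apply Equiv.subtypeEquivRight
  intro P
  constructor
  · rintro ⟨hP, h0, h1, h2, h3⟩
    refine ⟨hP, fun k => ?_⟩
    rcases k with _|_|_|k
    · exact h0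
    · exact h1
    · exact h2
    · rw [h3 _ (by omega), w642_ge3 M _ (by omega)]
  · rintro ⟨hP, hw⟩
    exact ⟨hP, hw 0, hw 1, hw 2, fun k hk => by rw [hw k, w642_ge3 M k hk]⟩

section Kostka

variable {f : ℕ → ℕ}

lemma inShape_iff0 {i j : ℕ} : InShape f (fun _ => 0) i j ↔ j < f i := by
  unfold InShape; simp

def SB (f : ℕ → ℕ) (N : ℕ) : Finset (ℕ × ℕ) :=
  (Finset.range N ×ˢ Finset.range (f 0)).filter (fun p => p.2 < f p.1)

lemma mem_SB {N : ℕ} (hmono : ∀ i j, i ≤ j → f j ≤ f i) {p : ℕ × ℕ} :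
    p ∈ SB f N ↔ p.1 < N ∧ p.2 < f p.1 := by
  unfold SB
  rw [Finset.mem_filter, Finset.mem_product, Finset.mem_range, Finset.mem_range]
  constructor
  · rintro ⟨⟨h1, _⟩, h3⟩; exact ⟨h1, h3⟩
  · rintro ⟨h1, h2⟩
    exact ⟨⟨h1, lt_of_lt_of_le h2 (hmono 0 p.1 (Nat.zero_le _))⟩, h2⟩

lemma card_SB (N : ℕ) (hmono : ∀ i j, i ≤ j → f j ≤ f i) :
    (SB f N).card = ∑ i ∈ Finset.range N, f i := by
  unfold SB
  rw [Finset.card_filter, Finset.sum_product]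
  refine Finset.sum_congr rfl fun i _ => ?_
  rw [← Finset.card_filter]
  have : (Finset.range (f 0)).filter (fun j => j < f i) = Finset.range (f i) := by
    ext j
    rw [Finset.mem_filter, Finset.mem_range, Finset.mem_range]
    have := hmono 0 i (Nat.zero_le _)
    constructor
    · rintro ⟨_, h⟩; exact h
    · intro h; exact ⟨by omega, h⟩
  rw [this, Finset.card_range]

lemma entry_ge {t : ℕ → ℕ → ℕ} (ht : IsSkewSSYT f (fun _ => 0) t)
    (hmono : ∀ i j, i ≤ j → f j ≤ f i) :
    ∀ i j, InShape f (fun _ => 0) i j → i + 1 ≤ t i j := by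
  intro i
  induction i with
  | zero => intro j hs; exact ht.1 0 j hs
  | succ n ih =>
    intro j hs
    have hs' : InShape f (fun _ => 0) n j := by
      rw [inShape_iff0] at hs ⊢
      exact lt_of_lt_of_le hs (hmono n (n+1) (by omega))
    have := ht.2.2.2 n j hs' hs
    have := ih j hs'
    omega

lemma wcard {N : ℕ} (hN : ∀ i, N ≤ i → f i = 0) (hmono : ∀ i j, i ≤ j → f j ≤ f i)
    {t : ℕ → ℕ → ℕ} (ht : IsSkewSSYT f (fun _ => 0) t) (k : ℕ) :
    Set.ncard {p : ℕ × ℕ | t p.1 p.2 = k + 1} =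
      ((SB f N).filter (fun p => t p.1 p.2 = k + 1)).card := by
  rw [← Set.ncard_coe_finset]
  congr 1
  ext p
  rw [Finset.coe_filter]
  simp only [Set.mem_setOf_eq, mem_SB hmono]
  constructor
  · intro h
    have hsh : InShape f (fun _ => 0) p.1 p.2 := by
      by_contra hns
      rw [ht.2.1 _ _ hns] at h; omega
    rw [inShape_iff0] at hsh
    have hN1 : p.1 < N := by
      by_contra hh
      rw [hN p.1 (by omega)] at hsh; omega
    exact ⟨⟨hN1, hsh⟩, h⟩
  · exact fun h => h.2

lemma psum_eq {N : ℕ} (hN : ∀ i, N ≤ i → f i = 0) (hmono : ∀ i j, i ≤ j → f j ≤ f i)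
    {t : ℕ → ℕ → ℕ} (ht : IsSkewSSYT f (fun _ => 0) t) (m : ℕ → ℕ)
    (hm : ∀ k, Set.ncard {p : ℕ × ℕ | t p.1 p.2 = k + 1} = m k) (K : ℕ) :
    ∑ k ∈ Finset.range K, m k = ((SB f N).filter (fun p => t p.1 p.2 ≤ K)).card := by
  induction K with
  | zero =>
    rw [Finset.sum_range_zero]
    symm
    rw [Finset.card_eq_zero, Finset.filter_eq_empty_iff]
    intro p hp
    have := ht.1 p.1 p.2 (inShape_iff0.2 ((mem_SB hmono).1 hp).2)
    omega
  | succ K ih =>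
    rw [Finset.sum_range_succ, ih]
    have hsplit : (SB f N).filter (fun p => t p.1 p.2 ≤ K + 1) =
        ((SB f N).filter (fun p => t p.1 p.2 ≤ K)) ∪
        ((SB f N).filter (fun p => t p.1 p.2 = K + 1)) := by
      ext p
      simp only [Finset.mem_filter, Finset.mem_union]
      constructor
      · rintro ⟨h1, h2⟩
        by_cases h : t p.1 p.2 ≤ K
        · exact Or.inl ⟨h1, h⟩
        · exact Or.inr ⟨h1, by omega⟩
      · rintro (⟨h1, h2⟩ | ⟨h1, h2⟩) <;> exact ⟨h1, by omega⟩
    rw [hsplit, Finset.card_union_of_disjoint, ← hm K, wcard hN hmono ht K]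
    rw [Finset.disjoint_filter]
    intro p _ h1 h2
    omega

lemma psum_le {N : ℕ} (hN : ∀ i, N ≤ i → f i = 0) (hmono : ∀ i j, i ≤ j → f j ≤ f i)
    {t : ℕ → ℕ → ℕ} (ht : IsSkewSSYT f (fun _ => 0) t) (K : ℕ) :
    ((SB f N).filter (fun p => t p.1 p.2 ≤ K)).card ≤ ∑ i ∈ Finset.range K, f i := by
  have hsub : (SB f N).filter (fun p => t p.1 p.2 ≤ K) ⊆
      (SB f N).filter (fun p => p.1 < K) := by
    intro p hp
    rw [Finset.mem_filter] at hp ⊢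
    refine ⟨hp.1, ?_⟩
    have := entry_ge ht hmono p.1 p.2 (inShape_iff0.2 ((mem_SB hmono).1 hp.1).2)
    omega
  refine le_trans (Finset.card_le_card hsub) ?_
  have hEq : (SB f N).filter (fun p => p.1 < K) = SB f (min N K) := by
    ext p
    rw [Finset.mem_filter, mem_SB hmono, mem_SB hmono]
    omega
  rw [hEq, card_SB (min N K) hmono]
  exact Finset.sum_le_sum_of_subset (Finset.range_subset_range.2 (by omega))

lemma psum_big {N : ℕ} (hN : ∀ i, N ≤ i → f i = 0) (hmono : ∀ i j, i ≤ j → f j ≤ f i)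
    {t : ℕ → ℕ → ℕ} (ht : IsSkewSSYT f (fun _ => 0) t) (K : ℕ)
    (hK : N ≤ K) (hKe : ∀ p ∈ SB f N, t p.1 p.2 ≤ K) :
    ((SB f N).filter (fun p => t p.1 p.2 ≤ K)).card = ∑ i ∈ Finset.range K, f i := by
  have : (SB f N).filter (fun p => t p.1 p.2 ≤ K) = SB f N := by
    rw [Finset.filter_eq_self]; exact hKe
  rw [this, card_SB N hmono]
  symm
  rw [← Finset.sum_subset (Finset.range_subset_range.2 hK)]
  intro i _ hi
  rw [Finset.mem_range] at hi
  exact hN i (by omega)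

lemma ssyt_facts (hf : IsPartition f) {t : ℕ → ℕ → ℕ} (ht : IsSkewSSYT f (fun _ => 0) t)
    (m : ℕ → ℕ) (hm : ∀ k, Set.ncard {p : ℕ × ℕ | t p.1 p.2 = k + 1} = m k) :
    (∀ K, ∑ k ∈ Finset.range K, m k ≤ ∑ i ∈ Finset.range K, f i) ∧
    ∃ B, ∀ K, B ≤ K → ∑ k ∈ Finset.range K, m k = ∑ i ∈ Finset.range K, f i := by
  obtain ⟨hmono, N, hN⟩ := hf
  constructor
  · intro K
    rw [psum_eq hN hmono ht m hm K]
    exact psum_le hN hmono ht K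
  · refine ⟨N + (SB f N).sup (fun p => t p.1 p.2), fun K hK => ?_⟩
    rw [psum_eq hN hmono ht m hm K]
    exact psum_big hN hmono ht K (by omega)
      (fun p hp => le_trans (Finset.le_sup (f := fun p => t p.1 p.2) hp) (by omega))

end Kostka

section Kostka2

variable {f : ℕ → ℕ}

def tdiag (f : ℕ → ℕ) : ℕ → ℕ → ℕ := fun i j => if j < f i then i + 1 else 0

lemma tdiag_ssyt (hmono : ∀ i j, i ≤ j → f j ≤ f i) :
    IsSkewSSYT f (fun _ => 0) (tdiag f) := by
  refine ⟨?_, ?_, ?_, ?_⟩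
  · intro i j hs
    rw [inShape_iff0] at hs
    rw [tdiag, if_pos hs]; omega
  · intro i j hs
    rw [inShape_iff0] at hs
    rw [tdiag, if_neg hs]
  · intro i j h1 h2
    rw [inShape_iff0] at h1 h2
    simp only [tdiag]
    rw [if_pos h1, if_pos h2]
  · intro i j h1 h2
    rw [inShape_iff0] at h1 h2
    simp only [tdiag]
    rw [if_pos h1, if_pos h2]; omega

lemma tdiag_weight (k : ℕ) :
    Set.ncard {p : ℕ × ℕ | tdiag f p.1 p.2 = k + 1} = f k := by
  have : {p : ℕ × ℕ | tdiag f p.1 p.2 = k + 1} =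
      ↑(({k} : Finset ℕ) ×ˢ Finset.range (f k)) := by
    ext ⟨i, j⟩
    simp only [Set.mem_setOf_eq, Finset.coe_product, Set.mem_prod, Finset.coe_singleton,
      Set.mem_singleton_iff, Finset.coe_range, Set.mem_Iio]
    unfold tdiag
    split
    · constructor
      · intro h
        have : i = k := by omega
        subst this
        exact ⟨rfl, by assumption⟩
      · rintro ⟨rfl, _⟩; rfl
    · constructor
      · intro h; omega
      · rintro ⟨rfl, h⟩
        exact absurd h (by assumption)
  rw [this, Set.ncard_coe_finset, Finset.card_product, Finset.card_singleton,
    Finset.card_range, one_mul]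

lemma ssyt_unique (hf : IsPartition f) {t : ℕ → ℕ → ℕ}
    (ht : IsSkewSSYT f (fun _ => 0) t)
    (hw : ∀ k, Set.ncard {p : ℕ × ℕ | t p.1 p.2 = k + 1} = f k) :
    t = tdiag f := by
  obtain ⟨hmono, N, hN⟩ := hf
  have key : ∀ K, (SB f N).filter (fun p => t p.1 p.2 ≤ K) =
      (SB f N).filter (fun p => p.1 < K) := by
    intro K
    have h1 : ∑ k ∈ Finset.range K, f k =
        ((SB f N).filter (fun p => t p.1 p.2 ≤ K)).card :=
      psum_eq hN hmono ht f hw K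
    have hsub : (SB f N).filter (fun p => t p.1 p.2 ≤ K) ⊆
        (SB f N).filter (fun p => p.1 < K) := by
      intro p hp
      rw [Finset.mem_filter] at hp ⊢
      refine ⟨hp.1, ?_⟩
      have := entry_ge ht hmono p.1 p.2 (inShape_iff0.2 ((mem_SB hmono).1 hp.1).2)
      omega
    have hcard : ((SB f N).filter (fun p => p.1 < K)).card ≤
        ((SB f N).filter (fun p => t p.1 p.2 ≤ K)).card := by
      have hEq : (SB f N).filter (fun p => p.1 < K) = SB f (min N K) := by
        ext p
        rw [Finset.mem_filter, mem_SB hmono, mem_SB hmono]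
        omega
      rw [hEq, card_SB (min N K) hmono, ← h1]
      refine le_of_eq (Finset.sum_subset (Finset.range_subset_range.2 (min_le_right N K)) ?_)
      intro i _ hi
      rw [Finset.mem_range, lt_min_iff, not_and_or, not_lt, not_lt] at hi
      rcases hi with h | h
      · exact hN i h
      · rw [Finset.mem_range] at *; omega
    exact Finset.eq_of_subset_of_card_le hsub hcard
  have hval : ∀ i j, j < f i → t i j = i + 1 := by
    intro i j hj
    have hiN : i < N := by
      by_contra h
      rw [hN i (by omega)] at hj; omega
    have hmem : (i, j) ∈ (SB f N).filter (fun p => p.1 < i + 1) := by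
      rw [Finset.mem_filter, mem_SB hmono]
      exact ⟨⟨hiN, hj⟩, by omega⟩
    rw [← key (i + 1), Finset.mem_filter] at hmem
    have := entry_ge ht hmono i j (inShape_iff0.2 hj)
    have h2 := hmem.2
    simp only at h2
    omega
  funext i j
  by_cases hj : j < f i
  · rw [hval i j hj, tdiag, if_pos hj]
  · rw [ht.2.1 i j (fun hs => hj (inShape_iff0.1 hs)), tdiag, if_neg hj]

lemma kostka_diag (hf : IsPartition f) :
    Nat.card {t : ℕ → ℕ → ℕ // IsSkewSSYT f (fun _ => 0) t ∧
      ∀ k : ℕ, Set.ncard {p : ℕ × ℕ | t p.1 p.2 = k + 1} = f k} = 1 := by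
  rw [Nat.card_eq_one_iff_unique]
  constructor
  · constructor
    intro a b
    apply Subtype.ext
    rw [ssyt_unique hf a.2.1 a.2.2, ssyt_unique hf b.2.1 b.2.2]
  · exact ⟨⟨tdiag f, tdiag_ssyt hf.1, fun k => tdiag_weight k⟩⟩

end Kostka2

section Part2

def gsum (f : ℕ → ℕ) (K : ℕ) : ℕ := ∑ i ∈ Finset.range K, f i

lemma gsum_mono (f : ℕ → ℕ) {K K' : ℕ} (h : K ≤ K') : gsum f K ≤ gsum f K' :=
  Finset.sum_le_sum_of_subset (Finset.range_subset_range.2 h)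

lemma gsum_succ (f : ℕ → ℕ) (K : ℕ) : gsum f (K + 1) = gsum f K + f K :=
  Finset.sum_range_succ f K

lemma gsum_ext {f g : ℕ → ℕ} (h : ∀ K, gsum f K = gsum g K) : f = g := by
  funext i
  have h1 := h (i + 1)
  have h2 := h i
  rw [gsum_succ, gsum_succ] at h1
  omega

lemma partition_w642 (M : ℕ) : IsPartition (w642 M) := by
  constructor
  · intro i j hij
    unfold w642
    split_ifs <;> omega
  · exact ⟨3, fun i hi => w642_ge3 M i hi⟩

lemma gsum_w642_1 (M : ℕ) : gsum (w642 M) 1 = 6 * M := by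
  rw [gsum, Finset.sum_range_one]; rfl

lemma gsum_w642_2 (M : ℕ) : gsum (w642 M) 2 = 10 * M := by
  rw [gsum, Finset.sum_range_succ, Finset.sum_range_one]
  show 6 * M + 4 * M = 10 * M; ring

lemma gsum_w642_3 (M : ℕ) : gsum (w642 M) 3 = 12 * M := by
  rw [gsum, Finset.sum_range_succ, Finset.sum_range_succ, Finset.sum_range_one]
  show 6 * M + 4 * M + 2 * M = 12 * M; ring

lemma gsum_w642_ge3 (M : ℕ) {K : ℕ} (h : 3 ≤ K) : gsum (w642 M) K = 12 * M := by
  rw [← gsum_w642_3 M, gsum, gsum]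
  symm
  refine Finset.sum_subset (Finset.range_subset_range.2 h) ?_
  intro i _ hi
  rw [Finset.mem_range] at hi
  exact w642_ge3 M i (by omega)

/-- `Sz M f`: the partial sums of `f` stabilize at `12M` from index `3` on. -/
def Sz (M : ℕ) (f : ℕ → ℕ) : Prop := ∀ K, 3 ≤ K → gsum f K = 12 * M

lemma Sz_zero_ge3 {M : ℕ} {f : ℕ → ℕ} (h : Sz M f) {i : ℕ} (hi : 3 ≤ i) : f i = 0 := by
  have h1 := h i hi
  have h2 := h (i + 1) (by omega)
  rw [gsum_succ] at h2
  omega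

/-- No plethystic tableau has weight `g` when `g` dominates `w642 M` with equal size,
unless `g = w642 M`. -/
lemma no_pleth_dominating (M : ℕ) (g : ℕ → ℕ)
    (hdom : ∀ K, gsum (w642 M) K ≤ gsum g K) (hsz : Sz M g) (hne : g ≠ w642 M)
    (P : ℕ → ℕ → ℕ → ℕ → ℕ) (hP : IsPlethSSYT (outer4 M) mu21 (fun _ => 0) P)
    (hw : ∀ k, plethWeight P k = g k) : False := by
  have hz3 : ∀ k, 3 ≤ k → plethWeight P k = 0 := fun k hk => by
    rw [hw k]; exact Sz_zero_ge3 hsz hk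
  obtain ⟨hb0, hb2⟩ := pw_bounds M P hP hz3
  rw [hw 0] at hb0
  rw [hw 2] at hb2
  have h1 : 6 * M ≤ g 0 := by
    have := hdom 1
    rw [gsum_w642_1] at this
    rw [gsum, Finset.sum_range_one] at this
    exact this
  have h2 : 10 * M ≤ g 0 + g 1 := by
    have := hdom 2
    rw [gsum_w642_2] at this
    rw [gsum, Finset.sum_range_succ, Finset.sum_range_one] at this
    exact this
  have h3 : g 0 + g 1 + g 2 = 12 * M := by
    have := hsz 3 (by omega)
    rw [gsum, Finset.sum_range_succ, Finset.sum_range_succ, Finset.sum_range_one] at this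
    exact this
  apply hne
  funext i
  rcases i with _|_|_|i
  · show g 0 = 6 * M; omega
  · show g 1 = 4 * M; omega
  · show g 2 = 2 * M; omega
  · rw [Sz_zero_ge3 hsz (by omega : 3 ≤ i + 3), w642_ge3 M _ (by omega)]

end Part2

section Part2b

lemma coeff_eq (M : ℕ) (S : Finset (ℕ → ℕ)) (c : (ℕ → ℕ) → ℚ)
    (hEq : plethysmPS (outer4 M) mu21 (fun _ => 0) = ∑ f ∈ S, c f • schurPS f)
    (m : ℕ →₀ ℕ) :
    (Nat.card {P : ℕ → ℕ → ℕ → ℕ → ℕ //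
        IsPlethSSYT (outer4 M) mu21 (fun _ => 0) P ∧ ∀ k, plethWeight P k = m k} : ℚ) =
      ∑ f ∈ S, c f * (Nat.card {t : ℕ → ℕ → ℕ // IsSkewSSYT f (fun _ => 0) t ∧
        ∀ k : ℕ, Set.ncard {p : ℕ × ℕ | t p.1 p.2 = k + 1} = m k} : ℚ) := by
  have h := congrArg (MvPowerSeries.coeff m) hEq
  rw [map_sum] at h
  simp only [map_smul, smul_eq_mul] at h
  exact h

end Part2b

section Part2c

lemma Sz_w642 (M : ℕ) : Sz M (w642 M) := fun K hK => gsum_w642_ge3 M hK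

lemma Sz_transfer {M : ℕ} {g f : ℕ → ℕ} (hdom : ∀ K, gsum g K ≤ gsum f K)
    (hev : ∃ B, ∀ K, B ≤ K → gsum g K = gsum f K) (hg : Sz M g) : Sz M f := by
  obtain ⟨B, hB⟩ := hev
  intro K hK
  have hle : gsum f K ≤ 12 * M := by
    calc gsum f K ≤ gsum f (max B K) := gsum_mono f (le_max_right _ _)
      _ = gsum g (max B K) := (hB _ (le_max_left _ _)).symm
      _ = 12 * M := hg _ (by omega)
  have hge : 12 * M ≤ gsum f K := by
    rw [← hg K hK]; exact hdom K
  omega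

lemma dom_antisymm {g f : ℕ → ℕ} (h1 : ∀ K, gsum g K ≤ gsum f K)
    (h2 : ∀ K, gsum f K ≤ gsum g K) : g = f :=
  gsum_ext (fun K => le_antisymm (h1 K) (h2 K))

/-- From a nonzero Kostka-type count, extract dominance facts. -/
lemma kostka_facts {f : ℕ → ℕ} (hf : IsPartition f) {m : ℕ →₀ ℕ} {g : ℕ → ℕ}
    (hm : ∀ k, m k = g k)
    (hne : (Nat.card {t : ℕ → ℕ → ℕ // IsSkewSSYT f (fun _ => 0) t ∧
      ∀ k : ℕ, Set.ncard {p : ℕ × ℕ | t p.1 p.2 = k + 1} = m k} : ℚ) ≠ 0) :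
    (∀ K, gsum g K ≤ gsum f K) ∧ ∃ B, ∀ K, B ≤ K → gsum g K = gsum f K := by
  have hcard : Nat.card {t : ℕ → ℕ → ℕ // IsSkewSSYT f (fun _ => 0) t ∧
      ∀ k : ℕ, Set.ncard {p : ℕ × ℕ | t p.1 p.2 = k + 1} = m k} ≠ 0 := by
    intro h; rw [h] at hne; exact hne (by norm_num)
  obtain ⟨⟨t, ht, hwt⟩⟩ := (Nat.card_ne_zero.1 hcard).1
  exact ssyt_facts hf ht g (fun k => by rw [hwt k, hm k])

lemma kostka_diag' {f : ℕ → ℕ} (hf : IsPartition f) {m : ℕ →₀ ℕ} (hm : ∀ k, m k = f k) :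
    Nat.card {t : ℕ → ℕ → ℕ // IsSkewSSYT f (fun _ => 0) t ∧
      ∀ k : ℕ, Set.ncard {p : ℕ × ℕ | t p.1 p.2 = k + 1} = m k} = 1 := by
  have e := Equiv.subtypeEquivRight
    (p := fun t : ℕ → ℕ → ℕ => IsSkewSSYT f (fun _ => 0) t ∧
      ∀ k : ℕ, Set.ncard {p : ℕ × ℕ | t p.1 p.2 = k + 1} = m k)
    (q := fun t : ℕ → ℕ → ℕ => IsSkewSSYT f (fun _ => 0) t ∧
      ∀ k : ℕ, Set.ncard {p : ℕ × ℕ | t p.1 p.2 = k + 1} = f k) (fun t => by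
    constructor
    · rintro ⟨h1, h2⟩; exact ⟨h1, fun k => by rw [h2 k, hm k]⟩
    · rintro ⟨h1, h2⟩; exact ⟨h1, fun k => (h2 k).trans (hm k).symm⟩)
  rw [Nat.card_congr e]
  exact kostka_diag hf

lemma part2 (M : ℕ) (S : Finset (ℕ → ℕ)) (hS : ∀ f ∈ S, IsPartition f)
    (c : (ℕ → ℕ) → ℚ)
    (hEq : plethysmPS (outer4 M) mu21 (fun _ => 0) = ∑ f ∈ S, c f • schurPS f) :
    w642 M ∈ S ∧ c (w642 M) = M + 1 := by
  classical
  set Φ : (ℕ → ℕ) → ℕ := fun h => ∑ K ∈ Finset.range (12 * M + 4), gsum h K with hΦ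
  have phi_lt : ∀ g f : ℕ → ℕ, g ≠ f → (∀ K, gsum g K ≤ gsum f K) →
      Sz M g → Sz M f → Φ g < Φ f := by
    intro g f hne hdom hg hf
    have hKex : ∃ K, gsum g K < gsum f K := by
      by_contra hcon
      push_neg at hcon
      exact hne (dom_antisymm hdom hcon)
    obtain ⟨K, hK⟩ := hKex
    have hK3 : K < 3 := by
      by_contra h
      rw [hg K (by omega), hf K (by omega)] at hK
      omega
    refine Finset.sum_lt_sum (fun i _ => hdom i) ⟨K, Finset.mem_range.2 (by omega), hK⟩
  -- the set of "bad" partitions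
  set D : Finset (ℕ → ℕ) := S.filter (fun g => c g ≠ 0 ∧ g ≠ w642 M ∧
    (∀ K, gsum (w642 M) K ≤ gsum g K) ∧ Sz M g) with hD
  have hDempty : D = ∅ := by
    by_contra hne
    obtain ⟨g, hgD, hgmax⟩ := Finset.exists_max_image D Φ (Finset.nonempty_iff_ne_empty.2 hne)
    obtain ⟨hgS, hc, hgne, hdom, hsz⟩ := Finset.mem_filter.1 hgD
    obtain ⟨gmono, Ng, hNg⟩ := hS g hgS
    set gFS : ℕ →₀ ℕ := Finsupp.onFinset (Finset.range Ng) g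
      (fun a ha => Finset.mem_range.2 (by by_contra h; exact ha (hNg a (by omega)))) with hgFS
    have hgFSa : ∀ k, gFS k = g k := fun k => Finsupp.onFinset_apply
    have h := coeff_eq M S c hEq gFS
    have hLHS : Nat.card {P : ℕ → ℕ → ℕ → ℕ → ℕ //
        IsPlethSSYT (outer4 M) mu21 (fun _ => 0) P ∧ ∀ k, plethWeight P k = gFS k} = 0 := by
      have : IsEmpty {P : ℕ → ℕ → ℕ → ℕ → ℕ //
          IsPlethSSYT (outer4 M) mu21 (fun _ => 0) P ∧ ∀ k, plethWeight P k = gFS k} := by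
        refine ⟨fun ⟨P, hP, hw⟩ => ?_⟩
        exact no_pleth_dominating M g hdom hsz hgne P hP (fun k => by rw [hw k, hgFSa k])
      exact Nat.card_of_isEmpty
    rw [hLHS] at h
    have hRHS : ∑ f ∈ S, c f * (Nat.card {t : ℕ → ℕ → ℕ // IsSkewSSYT f (fun _ => 0) t ∧
        ∀ k : ℕ, Set.ncard {p : ℕ × ℕ | t p.1 p.2 = k + 1} = gFS k} : ℚ) = c g := by
      rw [Finset.sum_eq_single_of_mem g hgS]
      · rw [kostka_diag' (hS g hgS) hgFSa, Nat.cast_one, mul_one]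
      · intro f hfS hfg
        by_cases hcf : c f = 0
        · rw [hcf, zero_mul]
        by_cases hK : (Nat.card {t : ℕ → ℕ → ℕ // IsSkewSSYT f (fun _ => 0) t ∧
            ∀ k : ℕ, Set.ncard {p : ℕ × ℕ | t p.1 p.2 = k + 1} = gFS k} : ℚ) = 0
        · rw [hK, mul_zero]
        exfalso
        obtain ⟨hdom2, hev2⟩ := kostka_facts (hS f hfS) hgFSa hK
        have hfw : f ≠ w642 M := by
          rintro rfl
          exact hgne (dom_antisymm hdom2 hdom)
        have hfD : f ∈ D := by
          rw [hD, Finset.mem_filter]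
          exact ⟨hfS, hcf, hfw, fun K => le_trans (hdom K) (hdom2 K),
            Sz_transfer hdom2 hev2 hsz⟩
        have h1 := hgmax f hfD
        have h2 := phi_lt g f (fun hgf => hfg (hgf.symm)) hdom2 hsz (Sz_transfer hdom2 hev2 hsz)
        omega
    rw [hRHS] at h
    rw [Nat.cast_zero] at h
    exact hc h.symm
  -- now evaluate at w642
  set wFS : ℕ →₀ ℕ := Finsupp.onFinset (Finset.range 3) (w642 M)
    (fun a ha => Finset.mem_range.2 (by by_contra h; exact ha (w642_ge3 M a (by omega)))) with hwFS
  have hwFSa : ∀ k, wFS k = w642 M k := fun k => Finsupp.onFinset_apply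
  have h := coeff_eq M S c hEq wFS
  have hLHS : Nat.card {P : ℕ → ℕ → ℕ → ℕ → ℕ //
      IsPlethSSYT (outer4 M) mu21 (fun _ => 0) P ∧ ∀ k, plethWeight P k = wFS k} = M + 1 := by
    rw [← count_main M]
    exact Nat.card_congr (Equiv.subtypeEquivRight (fun P => by
      constructor
      · rintro ⟨h1, h2⟩; exact ⟨h1, fun k => by rw [h2 k, hwFSa k]⟩
      · rintro ⟨h1, h2⟩; exact ⟨h1, fun k => by rw [h2 k, hwFSa k]⟩))
  rw [hLHS] at h
  have hothers : ∀ f ∈ S, f ≠ w642 M →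
      c f * (Nat.card {t : ℕ → ℕ → ℕ // IsSkewSSYT f (fun _ => 0) t ∧
        ∀ k : ℕ, Set.ncard {p : ℕ × ℕ | t p.1 p.2 = k + 1} = wFS k} : ℚ) = 0 := by
    intro f hfS hfw
    by_cases hcf : c f = 0
    · rw [hcf, zero_mul]
    by_cases hK : (Nat.card {t : ℕ → ℕ → ℕ // IsSkewSSYT f (fun _ => 0) t ∧
        ∀ k : ℕ, Set.ncard {p : ℕ × ℕ | t p.1 p.2 = k + 1} = wFS k} : ℚ) = 0
    · rw [hK, mul_zero]
    exfalso
    obtain ⟨hdom2, hev2⟩ := kostka_facts (hS f hfS) hwFSa hK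
    have hfD : f ∈ D := by
      rw [hD, Finset.mem_filter]
      exact ⟨hfS, hcf, hfw, hdom2, Sz_transfer hdom2 hev2 (Sz_w642 M)⟩
    rw [hDempty] at hfD
    exact absurd hfD (Finset.notMem_empty f)
  by_cases hw : w642 M ∈ S
  · refine ⟨hw, ?_⟩
    rw [Finset.sum_eq_single_of_mem _ hw hothers,
      kostka_diag' (partition_w642 M) hwFSa, Nat.cast_one, mul_one] at h
    rw [← h]
    push_cast
    ring
  · exfalso
    rw [Finset.sum_eq_zero (fun f hf => hothers f hf (fun hfw => hw (hfw ▸ hf)))] at h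
    have : ((M : ℚ) + 1) = 0 := by push_cast at h; linarith
    have := Nat.cast_add_one_ne_zero (R := ℚ) M
    exact this (by exact_mod_cast ‹(M : ℚ) + 1 = 0›)

end Part2c
/-- For `M ≥ 1` there are exactly `M + 1` plethystic semistandard
tableaux of outer shape `(M,M,M,M)`, inner shape `(2,1)` and weight `(6M, 4M, 2M)`;
consequently the coefficient of `s_{(6M,4M,2M)}` in (any Schur expansion of)
`s_{(M,M,M,M)} ∘ s_{(2,1)}` equals `M + 1` for all `M ≥ 0`; in particular it is
unbounded. -/
theorem plethysm_unbounded_multiplicity :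
    (∀ M : ℕ, 1 ≤ M →
      Nat.card {P : ℕ → ℕ → ℕ → ℕ → ℕ //
        IsPlethSSYT (outer4 M) mu21 (fun _ => 0) P ∧
        plethWeight P 0 = 6 * M ∧ plethWeight P 1 = 4 * M ∧ plethWeight P 2 = 2 * M ∧
        ∀ k : ℕ, 3 ≤ k → plethWeight P k = 0} = M + 1) ∧
    (∀ M : ℕ, ∀ S : Finset (ℕ → ℕ), (∀ f ∈ S, IsPartition f) →
      ∀ c : (ℕ → ℕ) → ℚ,
        plethysmPS (outer4 M) mu21 (fun _ => 0) = ∑ f ∈ S, c f • schurPS f →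
        w642 M ∈ S ∧ c (w642 M) = M + 1) := by
  constructor
  · intro M _
    exact part1 M
  · intro M S hS c hEq
    exact part2 M S hS c hEq
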